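/- Let k ≥ 1 and let (y_1, …, y_k) be an almost commuting tuple of elements of an associative algebra A (i.e. y_m·y_l = y_l·y_m whenever |m−l| > 1). Then P_k(y_1, …, y_k) = P'_k(y_1, …, y_k). -/

import Mathlib

section

variable {R : Type*} [CommRing R] {A : Type*} [Ring A] [Algebra R A]

/-- The `q`-bracket `[x,y]_q = x·y − q·y·x`. -/
def qbr (q : R) (x y : A) : A := x * y - q • (y * x)

/-- The polynomial `P_k(y_1, …, y_k)`, defined recursively by `P_1(y_1) = y_1` and
`P_{k+1}(y_1,…,y_{k+1}) = P_k(y_1,…,y_{k−1},[y_k,y_{k+1}]_q)`; equivalently, the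
right-nested iterated `q`-bracket `[y_1, [y_2, [… , [y_{k−1}, y_k]_q … ]_q]_q]_q`. -/
def Ppol (q : R) : List A → A
  | [] => 0
  | [y] => y
  | y :: l => qbr q y (Ppol q l)

/-- The polynomial `P'_k(y_1, …, y_k)`, defined recursively by `P'_1(y_1) = y_1` and
`P'_{k+1}(y_1,…,y_{k+1}) = [P'_k(y_1,…,y_k), y_{k+1}]_q`; i.e. the left-nested
iterated `q`-bracket. -/
def Ppol' (q : R) : List A → A
  | [] => 0
  | y :: l => l.foldl (qbr q) y

lemma qbr_qbr (q : R) (x w z : A) (h : x * z = z * x) :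
    qbr q x (qbr q w z) = qbr q (qbr q x w) z := by
  simp only [qbr, mul_sub, sub_mul, smul_sub, mul_smul_comm, smul_mul_assoc, smul_smul,
    mul_assoc]
  rw [show x * (z * w) = z * (x * w) by rw [← mul_assoc, h, mul_assoc],
    show w * (z * x) = w * (x * z) by rw [h]]
  abel

lemma qbr_foldl (q : R) (x : A) :
    ∀ (l : List A) (w : A), (∀ a ∈ l, x * a = a * x) →
      qbr q x (l.foldl (qbr q) w) = l.foldl (qbr q) (qbr q x w)
  | [], w, _ => rfl
  | a :: l, w, h => by
    simp only [List.foldl_cons]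
    rw [qbr_foldl q x l (qbr q w a) (fun b hb => h b (List.mem_cons_of_mem _ hb)),
      qbr_qbr q x w a (h a List.mem_cons_self)]

/-- If `(y_1, …, y_k)` is an almost commuting tuple (i.e. `y_m·y_l = y_l·y_m` whenever
`|m − l| > 1`), then `P_k(y_1, …, y_k) = P'_k(y_1, …, y_k)`. -/
theorem statement15 (q : R) (ys : List A) (hne : ys ≠ [])
    (hcomm : ∀ m l : Fin ys.length, ((m : ℕ) + 1 < (l : ℕ) ∨ (l : ℕ) + 1 < (m : ℕ)) →
      ys.get m * ys.get l = ys.get l * ys.get m) :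
    Ppol q ys = Ppol' q ys := by
  induction ys with
  | nil => exact absurd rfl hne
  | cons y l ih =>
    match l, ih with
    | [], _ => rfl
    | z :: t, ih =>
      have htail : Ppol q (z :: t) = Ppol' q (z :: t) := by
        refine ih (by simp) ?_
        intro m l hml
        have := hcomm m.succ l.succ (by simpa using hml)
        simpa using this
      show qbr q y (Ppol q (z :: t)) = (z :: t).foldl (qbr q) y
      rw [htail]
      show qbr q y (t.foldl (qbr q) z) = t.foldl (qbr q) (qbr q y z)
      refine qbr_foldl q y t z ?_
      intro a ha
      obtain ⟨i, hi⟩ := List.mem_iff_get.mp ha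
      have := hcomm ⟨0, by simp⟩ ⟨i + 2, by simpa using Nat.succ_lt_succ (Nat.succ_lt_succ i.isLt)⟩
        (by simp)
      rw [← hi]
      simpa using this

end
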